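/- Non-uniqueness of Jordan decompositions in 𝔰𝔭₄* in characteristic 2: let k be a field of characteristic 2, J the 4×4 antidiagonal matrix of ones, 𝔰𝔭₄ = {M : Mᵀ*J + J*M = 0}, u = 1 + E₀₁ + E₂₃, v = 1 + E₀₃, w = u*v. Define covectors on 𝔰𝔭₄ by f_s(M) = M₀₀ + M₂₂ and f_n(M) = M₂₀ and f = f_s + f_n. Then: (a) w ∈ Sp₄(k) (wᵀ*J*w = J); (b) w is an involution; (c) f(w*M*w) = f(M) for all M ∈ 𝔰𝔭₄; but (d) there exists M ∈ 𝔰𝔭₄ with f_s(w*M*w) ≠ f_s(M). Hence w fixes the covector X* = f but moves its semisimple part X*_s = f_s, giving two distinct semisimple parts of Jordan decompositions of X*. -/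

import Mathlib

set_option maxHeartbeats 1000000 in
theorem stmt_13 (k : Type*) [Field k] [CharP k 2]
    (J : Matrix (Fin 4) (Fin 4) k)
    (hJ : ∀ i j, J i j = if (i : ℕ) + (j : ℕ) = 3 then 1 else 0)
    (u v w : Matrix (Fin 4) (Fin 4) k)
    (hu : u = 1 + Matrix.single 0 1 1 + Matrix.single 2 3 1)
    (hv : v = 1 + Matrix.single 0 3 1)
    (hw : w = u * v) :
    w.transpose * J * w = J ∧
    w * w = 1 ∧
    (∀ M : Matrix (Fin 4) (Fin 4) k, M.transpose * J + J * M = 0 →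
      ((w * M * w) 0 0 + (w * M * w) 2 2) + (w * M * w) 2 0 =
        (M 0 0 + M 2 2) + M 2 0) ∧
    (∃ M : Matrix (Fin 4) (Fin 4) k, M.transpose * J + J * M = 0 ∧
      (w * M * w) 0 0 + (w * M * w) 2 2 ≠ M 0 0 + M 2 2) := by
  subst hu hv hw
  have h2 : (1:k)+1 = 0 := CharTwo.add_self_eq_zero 1
  refine ⟨?_, ?_, ?_, ?_⟩
  · ext i j
    fin_cases i <;> fin_cases j <;>
      simp (config := {decide := true}) [Matrix.mul_apply, Fin.sum_univ_four,
        Matrix.single, Matrix.one_apply, Matrix.transpose_apply, hJ] <;>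
      linear_combination h2
  · ext i j
    fin_cases i <;> fin_cases j <;>
      simp (config := {decide := true}) [Matrix.mul_apply, Fin.sum_univ_four,
        Matrix.single, Matrix.one_apply] <;>
      linear_combination h2
  · intro M hM
    have key := congrFun (congrFun hM 0) 2
    simp (config := {decide := true}) [Matrix.mul_apply, Fin.sum_univ_four,
      Matrix.single, Matrix.one_apply, Matrix.transpose_apply, hJ] at key ⊢
    linear_combination key + (M 3 0) * h2
  · refine ⟨Matrix.single 3 0 1, ?_, ?_⟩
    · ext i j
      fin_cases i <;> fin_cases j <;>
        simp (config := {decide := true}) [Matrix.mul_apply, Fin.sum_univ_four,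
          Matrix.single, Matrix.transpose_apply, hJ] <;>
        linear_combination h2
    · simp (config := {decide := true}) [Matrix.mul_apply, Fin.sum_univ_four,
        Matrix.single, Matrix.one_apply]
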